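/- Let H be a Hermitian circulant complex Hadamard matrix of order n, and write H = A + iB where A, B ∈ M_n(ℝ) are the real and imaginary parts of H. Then the matrix K = A + B satisfies K Kᵗ = n·I (i.e. K ∈ √n·O(n)), K² is symmetric, and K⁴ = n²·I. -/

import Mathlib

open Complex Matrix

/-- A complex Hadamard matrix: unimodular entries and pairwise orthogonal rows. -/
def IsHadamard {n : ℕ} [NeZero n] (H : Matrix (ZMod n) (ZMod n) ℂ) : Prop :=
  (∀ i j, ‖H i j‖ = 1) ∧ H * Hᴴ = (n : ℂ) • 1

/-- If `H = A + iB` is a Hermitian circulant complex Hadamard matrix, then `K = A + B`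
satisfies `K Kᵗ = n·I`, `K²` is symmetric, and `K⁴ = n²·I`. -/
theorem hermitian_circulant_hadamard_K
    (n : ℕ) [NeZero n] (H : Matrix (ZMod n) (ZMod n) ℂ)
    (hcirc : ∃ ξ : ZMod n → ℂ, ∀ i j, H i j = ξ (j - i))
    (hherm : Hᴴ = H) (hHad : _root_.IsHadamard H)
    (A B : Matrix (ZMod n) (ZMod n) ℝ)
    (hA : ∀ i j, A i j = (H i j).re) (hB : ∀ i j, B i j = (H i j).im)
    (K : Matrix (ZMod n) (ZMod n) ℝ) (hK : K = A + B) :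
    K * Kᵀ = (n : ℝ) • 1 ∧ (K * K)ᵀ = K * K ∧ K ^ 4 = ((n : ℝ) ^ 2) • 1 := by
  obtain ⟨ξ, hξ⟩ := hcirc
  -- H * H = n • 1
  have hHH : H * H = (n : ℂ) • 1 := by
    have := hHad.2; rwa [hherm] at this
  -- symmetry of A, antisymmetry of B
  have h3 : Aᵀ = A := by
    ext i j
    have h := congrFun (congrFun hherm i) j
    simp only [conjTranspose_apply, RCLike.star_def] at h
    have := congrArg Complex.re h
    simpa [hA] using this
  have h4 : Bᵀ = -B := by
    ext i j
    have h := congrFun (congrFun hherm i) j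
    simp only [conjTranspose_apply, RCLike.star_def] at h
    have := congrArg Complex.im h
    simp only [Complex.conj_im] at this
    simp [hB, ← this]
  -- A and B commute (circulant)
  have hAc : A = Matrix.circulant (fun k => (ξ (-k)).re) := by
    ext i j; simp [Matrix.circulant_apply, hA, hξ, neg_sub]
  have hBc : B = Matrix.circulant (fun k => (ξ (-k)).im) := by
    ext i j; simp [Matrix.circulant_apply, hB, hξ, neg_sub]
  have h5 : A * B = B * A := by
    rw [hAc, hBc]; exact Matrix.circulant_mul_comm _ _
  -- real and imaginary parts of H*H = n•1
  have h1 : A * A - B * B = (n : ℝ) • 1 := by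
    ext i j
    have h := congrArg Complex.re (congrFun (congrFun hHH i) j)
    rw [Matrix.mul_apply, Complex.re_sum] at h
    simp only [Complex.mul_re] at h
    simp only [Matrix.sub_apply, Matrix.mul_apply, Matrix.smul_apply, Matrix.one_apply,
      smul_eq_mul, hA, hB, ← Finset.sum_sub_distrib]
    rw [h]
    by_cases hij : i = j <;> simp [hij]
  have h2 : A * B + B * A = 0 := by
    ext i j
    have h := congrArg Complex.im (congrFun (congrFun hHH i) j)
    rw [Matrix.mul_apply, Complex.im_sum] at h
    simp only [Complex.mul_im] at h
    simp only [Matrix.add_apply, Matrix.mul_apply, Matrix.zero_apply, hA, hB,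
      ← Finset.sum_add_distrib]
    rw [h]
    by_cases hij : i = j <;> simp [hij]
  have hKt : Kᵀ = A - B := by
    rw [hK, Matrix.transpose_add, h3, h4, sub_eq_add_neg]
  have g1 : K * Kᵀ = (n : ℝ) • 1 := by
    rw [hKt, hK]
    have e : (A + B) * (A - B) = (A * A - B * B) + (B * A - A * B) := by noncomm_ring
    rw [e, ← h5, sub_self, add_zero, h1]
  have g2 : (K * K)ᵀ = K * K := by
    have hK2 : K * K = A * A + B * B := by
      rw [hK]
      have e : (A + B) * (A + B) = (A * A + B * B) + (A * B + B * A) := by noncomm_ring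
      rw [e, h2, add_zero]
    rw [hK2, Matrix.transpose_add, Matrix.transpose_mul, Matrix.transpose_mul, h3, h4]
    simp [Matrix.neg_mul, Matrix.mul_neg]
  refine ⟨g1, g2, ?_⟩
  have h6 : Kᵀ * Kᵀ = K * K := by rw [← Matrix.transpose_mul]; exact g2
  calc K ^ 4 = (K * K) * (K * K) := by rw [show (4:ℕ) = 2 + 2 from rfl, pow_add, pow_two]
    _ = (K * K) * (Kᵀ * Kᵀ) := by rw [h6]
    _ = K * ((K * Kᵀ) * Kᵀ) := by noncomm_ring
    _ = ((n : ℝ) ^ 2) • 1 := by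
        rw [g1, Matrix.smul_mul, Matrix.one_mul, Matrix.mul_smul, g1, smul_smul, sq]
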